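/- Let C be a stable ∞-category with sequential limits, and {Y_n} a tower that is d-rapidly convergent to Y_∞. Then for any exact functor F : C → D to a stable ∞-category D with sequential limits, the natural map F(Y_∞) → lim_n F(Y_n) is an equivalence. -/

import Mathlib

open CategoryTheory Limits Pretriangulated MonoidalCategory

universe v u

variable (C : Type u) [Category.{v} C]

section
variable [Preadditive C] [HasZeroObject C] [HasShift C ℤ]
  [∀ n : ℤ, (CategoryTheory.shiftFunctor C n).Additive] [Pretriangulated C]

/-- Fibre data for the comparison map from a constant tower `{Yinf}` to a tower `{Y n}`:
a choice of fibres `F n = fib(Yinf → Y n)`, functorially in `n`. -/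
structure TowerFiberData (Y : ℕ → C) (t : ∀ n, Y (n + 1) ⟶ Y n)
    (Yinf : C) (f : ∀ n, Yinf ⟶ Y n) where
  F : ℕ → C
  ft : ∀ n, F (n + 1) ⟶ F n
  ι : ∀ n, F n ⟶ Yinf
  δ : ∀ n, Y n ⟶ (F n)⟦(1 : ℤ)⟧
  tri : ∀ n, Triangle.mk (ι n) (f n) (δ n) ∈ distTriang C
  comm : ∀ n, ft n ≫ ι n = ι (n + 1)
  sqδ : ∀ n, t n ≫ δ n = δ (n + 1) ≫ (CategoryTheory.shiftFunctor C (1 : ℤ)).map (ft n)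

variable {C}

/-- The `k`-fold composite `F (n + k) ⟶ F n` in the tower of fibres. -/
def TowerFiberData.cmp {Y : ℕ → C} {t : ∀ n, Y (n + 1) ⟶ Y n} {Yinf : C}
    {f : ∀ n, Yinf ⟶ Y n} (D : TowerFiberData C Y t Yinf f) :
    ∀ n k : ℕ, D.F (n + k) ⟶ D.F n
  | _, 0 => 𝟙 _
  | n, k + 1 => D.ft (n + k) ≫ D.cmp n k

variable (C)

/-- A tower `{Y n}` is *`d`-rapidly convergent* to `Yinf` if there is fibre data for which
every `d`-fold composite in the tower of fibres is null. -/
def RapidlyConvergent (Y : ℕ → C) (t : ∀ n, Y (n + 1) ⟶ Y n)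
    (Yinf : C) (f : ∀ n, Yinf ⟶ Y n) (d : ℕ) : Prop :=
  ∃ D : TowerFiberData C Y t Yinf f, ∀ n, D.cmp n d = 0

end

section
variable [MonoidalCategory C]

/-- `A^{⊗(n+1)}`. -/
def tensorPow (A : C) : ℕ → C
  | 0 => A
  | n + 1 => tensorPow A n ⊗ A

/-- The `Tot`-tower of the cobar (Amitsur) complex `R^{⊗•+1} ⊗ M`: a cosimplicial object
whose `n`-th term is `R^{⊗(n+1)} ⊗ M`, partial totalizations `Tot n` realised as limits over
the truncated simplex categories, and the canonical augmentation maps `f n : M ⟶ Tot n`. -/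
structure CobarTotTower (R M : C) where
  X : CosimplicialObject C
  hX : ∀ n : ℕ, X.obj (SimplexCategory.mk n) ≅ tensorPow C R n ⊗ M
  Tot : ℕ → C
  t : ∀ n, Tot (n + 1) ⟶ Tot n
  cone : ∀ n : ℕ, Cone (SimplexCategory.Truncated.inclusion n ⋙ X)
  hpt : ∀ n, (cone n).pt = Tot n
  hlim : ∀ n, IsLimit (cone n)
  f : ∀ n, M ⟶ Tot n
  compat : ∀ n, f (n + 1) ≫ t n = f n

end

section RapidAux

variable {C}

/-- The `k`-fold composite `Y (n + k) ⟶ Y n` in a tower. -/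
def towerCmp (Y : ℕ → C) (t : ∀ n, Y (n + 1) ⟶ Y n) : ∀ n k : ℕ, Y (n + k) ⟶ Y n
  | _, 0 => 𝟙 _
  | n, k + 1 => t (n + k) ≫ towerCmp Y t n k

variable [Preadditive C] [HasZeroObject C] [HasShift C ℤ]
  [∀ n : ℤ, (CategoryTheory.shiftFunctor C n).Additive] [Pretriangulated C]
  {Y : ℕ → C} {t : ∀ n, Y (n + 1) ⟶ Y n} {Yinf : C} {f : ∀ n, Yinf ⟶ Y n}
  (Φ : TowerFiberData C Y t Yinf f)

lemma TowerFiberData.cmp_ι (n k : ℕ) : Φ.cmp n k ≫ Φ.ι n = Φ.ι (n + k) := by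
  induction k with
  | zero => simp [TowerFiberData.cmp]
  | succ k ih =>
      rw [TowerFiberData.cmp, Category.assoc, ih]
      exact Φ.comm (n + k)

lemma TowerFiberData.towerCmp_δ (n k : ℕ) :
    towerCmp Y t n k ≫ Φ.δ n =
      Φ.δ (n + k) ≫ (CategoryTheory.shiftFunctor C (1 : ℤ)).map (Φ.cmp n k) := by
  induction k with
  | zero => simp [towerCmp, TowerFiberData.cmp]
  | succ k ih =>
      rw [towerCmp, TowerFiberData.cmp, Category.assoc, ih, ← Category.assoc, Φ.sqδ,
        Category.assoc, ← Functor.map_comp]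
      rfl

lemma f_towerCmp (hc : ∀ n, f (n + 1) ≫ t n = f n) (n k : ℕ) :
    f (n + k) ≫ towerCmp Y t n k = f n := by
  induction k with
  | zero => simp [towerCmp]
  | succ k ih =>
      show f (n + k + 1) ≫ t (n + k) ≫ towerCmp Y t n k = f n
      rw [← Category.assoc, hc (n + k), ih]

end RapidAux


/-- Let `{Y n}` be a tower in a stable ∞-category `C` which is `d`-rapidly
convergent to `Y∞`.  Then for any exact functor `F : C ⥤ D`, the natural map
`F(Y∞) → lim_n F(Y n)` is an equivalence: the cone on `F(Y∞)` with legs `F(f n)` is a limit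
cone. -/
theorem exact_functor_preserves_rapidly_convergent_limit
    [Preadditive C] [HasZeroObject C] [HasShift C ℤ]
    [∀ n : ℤ, (CategoryTheory.shiftFunctor C n).Additive] [Pretriangulated C]
    (D : Type*) [Category D] [Preadditive D] [HasZeroObject D] [HasShift D ℤ]
    [∀ n : ℤ, (CategoryTheory.shiftFunctor D n).Additive] [Pretriangulated D]
    [HasLimitsOfShape ℕᵒᵖ D]
    (F : C ⥤ D) [F.CommShift ℤ] [F.IsTriangulated]
    (Y : ℕ → C) (t : ∀ n, Y (n + 1) ⟶ Y n) (Yinf : C) (f : ∀ n, Yinf ⟶ Y n)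
    (hc : ∀ n, f (n + 1) ≫ t n = f n)
    (d : ℕ) (h : RapidlyConvergent C Y t Yinf f d) :
    ∃ c : Cone ((CategoryTheory.Functor.ofSequence
        (fun n => (F.map (t n)).op : ∀ n, Opposite.op (F.obj (Y n)) ⟶
          Opposite.op (F.obj (Y (n + 1))))).leftOp),
      Nonempty (IsLimit c) ∧
      ∃ e : c.pt ≅ F.obj Yinf,
        ∀ n : ℕ, c.π.app (Opposite.op n) = e.hom ≫ F.map (f n) := by
  obtain ⟨Φ, hΦ⟩ := h
  set G := (CategoryTheory.Functor.ofSequence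
      (fun n => (F.map (t n)).op : ∀ n, Opposite.op (F.obj (Y n)) ⟶
        Opposite.op (F.obj (Y (n + 1))))).leftOp with hG
  have dist : ∀ n, F.mapTriangle.obj (Triangle.mk (Φ.ι n) (f n) (Φ.δ n)) ∈ distTriang D :=
    fun n => F.map_distinguished _ (Φ.tri n)
  have ι_zero : ∀ n, Φ.ι (n + d) = (0 : Φ.F (n + d) ⟶ Yinf) := by
    intro n
    rw [← Φ.cmp_ι n d, hΦ n, Limits.zero_comp]
  -- description of the maps of G
  have Gmap : ∀ (n k : ℕ) (hle : n ≤ n + k),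
      G.map ((homOfLE hle).op : Opposite.op (n + k) ⟶ Opposite.op n) =
        F.map (towerCmp Y t n k) := by
    intro n k
    induction k with
    | zero =>
        intro hle
        show G.map (𝟙 (Opposite.op (n + 0))) = F.map (towerCmp Y t n 0)
        rw [G.map_id]
        show 𝟙 (F.obj (Y n)) = _
        simp [towerCmp]
    | succ k ih =>
        intro hle
        have h1 : n ≤ n + k := Nat.le_add_right n k
        have h2 : n + k ≤ n + k + 1 := Nat.le_add_right (n + k) 1
        have h0 : homOfLE hle = homOfLE h1 ≫ homOfLE h2 := rfl
        have h3 : G.map ((homOfLE h2).op : Opposite.op (n + k + 1) ⟶ Opposite.op (n + k)) =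
            F.map (t (n + k)) :=
          congrArg Quiver.Hom.unop (CategoryTheory.Functor.ofSequence_map_homOfLE_succ
            (fun n => ((F.map (t n)).op : Opposite.op (F.obj (Y n)) ⟶
              Opposite.op (F.obj (Y (n + 1))))) (n + k))
        rw [h0, op_comp, G.map_comp, ih h1, h3]
        erw [← F.map_comp]
        rfl
  -- injectivity
  have inj : ∀ (T : D) (a b : T ⟶ F.obj Yinf) (m : ℕ), d ≤ m →
      a ≫ F.map (f m) = b ≫ F.map (f m) → a = b := by
    intro T a b m hdm hab
    obtain ⟨k, hk⟩ := Nat.exists_eq_add_of_le' hdm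
    subst hk
    have h0 : (a - b) ≫ F.map (f (k + d)) = 0 := by
      rw [Preadditive.sub_comp, hab, sub_self]
    obtain ⟨e, he⟩ := Triangle.coyoneda_exact₂ _ (dist (k + d)) (a - b) h0
    have hz : a - b = 0 := by
      rw [he]
      have h1 : (F.mapTriangle.obj (Triangle.mk (Φ.ι (k + d)) (f (k + d)) (Φ.δ (k + d)))).mor₁
          = F.map (Φ.ι (k + d)) := rfl
      rw [h1, ι_zero k, F.map_zero]
      exact Limits.comp_zero
    rwa [sub_eq_zero] at hz
  -- the cone with point `F.obj Yinf`
  have conenat : ∀ {j j' : ℕᵒᵖ} (φ : j ⟶ j'),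
      F.map (f j.unop) ≫ G.map φ = F.map (f j'.unop) := by
    intro j j' φ
    obtain ⟨m⟩ := j
    obtain ⟨n⟩ := j'
    have hle : n ≤ m := leOfHom φ.unop
    obtain ⟨k, rfl⟩ := Nat.exists_eq_add_of_le hle
    have h0 : φ = (homOfLE hle).op := rfl
    rw [h0, Gmap n k hle]
    exact (F.map_comp _ _).symm.trans (congrArg F.map (f_towerCmp hc n k))
  refine ⟨⟨F.obj Yinf,
    { app := fun j => F.map (f j.unop),
      naturality := fun j j' φ => by
        dsimp
        erw [Category.id_comp]
        exact (conenat φ).symm }⟩, ⟨?_⟩, Iso.refl _, fun n => (Category.id_comp _).symm⟩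
  -- it is a limit cone
  have legw : ∀ (s : Cone G) (n k : ℕ),
      s.π.app (Opposite.op (n + k)) ≫ F.map (towerCmp Y t n k) = s.π.app (Opposite.op n) := by
    intro s n k
    rw [← Gmap n k (Nat.le_add_right n k)]
    exact s.w ((homOfLE (Nat.le_add_right n k)).op)
  -- existence of lifts
  have lifts : ∀ (s : Cone G) (n : ℕ), ∃ hh : s.pt ⟶ F.obj Yinf,
      s.π.app (Opposite.op n) = hh ≫ F.map (f n) := by
    intro s n
    have obst : (s.π.app (Opposite.op n) : s.pt ⟶ F.obj (Y n)) ≫ F.map (Φ.δ n) = 0 := by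
      erw [← legw s n d, Category.assoc, ← F.map_comp, Φ.towerCmp_δ n d, hΦ n,
        Functor.map_zero, Limits.comp_zero, F.map_zero, Limits.comp_zero]
    have obst' : (s.π.app (Opposite.op n) : s.pt ⟶ F.obj (Y n)) ≫
        (F.mapTriangle.obj (Triangle.mk (Φ.ι n) (f n) (Φ.δ n))).mor₃ = 0 := by
      have h1 : (F.mapTriangle.obj (Triangle.mk (Φ.ι n) (f n) (Φ.δ n))).mor₃ =
          F.map (Φ.δ n) ≫ (F.commShiftIso (1 : ℤ)).hom.app (Φ.F n) := rfl
      erw [h1, ← Category.assoc, obst, Limits.zero_comp]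
    exact Triangle.coyoneda_exact₃ _ (dist n) _ obst'
  choose hh hhspec using lifts
  have gen : ∀ (s : Cone G) (b m k : ℕ) (hk : m = b + k) (a : s.pt ⟶ F.obj Yinf),
      s.π.app (Opposite.op m) = a ≫ F.map (f m) →
        a ≫ F.map (f b) = s.π.app (Opposite.op b) := by
    intro s b m k hk a ha
    subst hk
    erw [← f_towerCmp hc b k, F.map_comp, ← Category.assoc, ← ha, legw s b k]
  refine IsLimit.mk (fun s => hh s d) ?_ ?_
  · intro s j
    obtain ⟨n⟩ := j
    show hh s d ≫ F.map (f n) = s.π.app (Opposite.op n)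
    have key : hh s (n + d) = hh s d := by
      refine inj _ _ _ d (le_refl d) ?_
      rw [gen s d (n + d) n (Nat.add_comm n d) (hh s (n + d)) (hhspec s (n + d)),
        hhspec s d]
    rw [← key]
    exact gen s n (n + d) d rfl (hh s (n + d)) (hhspec s (n + d))
  · intro s m' hm'
    refine inj _ _ _ d (le_refl d) ?_
    rw [← hhspec s d]
    exact hm' (Opposite.op d)
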